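/- Let R be an infinite large integral domain. For any finite partition R = C_1 ∪ C_2 ∪ ... ∪ C_k, at least one cell C_i is both additively central in (R, +) and multiplicatively central in (R \ {0}, ·). -/

import Mathlib

/-- Product of ultrafilters on a semigroup `S` (the restriction to `βS` of the
Stone–Čech extension of the multiplication):
`A ∈ umul p q ↔ {x | {y | x * y ∈ A} ∈ q} ∈ p`. -/
def umul {S : Type*} [Semigroup S] (p q : Ultrafilter S) : Ultrafilter S :=
  p.bind fun x => q.map (x * ·)

/-- `p` is a minimal idempotent of `(βS, ·)`: `p` is idempotent and minimal for the
order `q ≤ p ↔ q·p = p·q = q` on idempotents. -/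
def IsMinimalIdempotent {S : Type*} [Semigroup S] (p : Ultrafilter S) : Prop :=
  umul p p = p ∧ ∀ q : Ultrafilter S, umul q q = q →
    umul q p = q → umul p q = q → q = p

/-- `A` is central in the semigroup `(S, ·)`: `A` belongs to some minimal idempotent
ultrafilter. -/
def Central {S : Type*} [Semigroup S] (A : Set S) : Prop :=
  ∃ p : Ultrafilter S, IsMinimalIdempotent p ∧ A ∈ p

/-- Sum of ultrafilters on an additive semigroup `S`:
`A ∈ uadd p q ↔ {x | {y | x + y ∈ A} ∈ q} ∈ p`. -/
def uadd {S : Type*} [AddSemigroup S] (p q : Ultrafilter S) : Ultrafilter S :=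
  p.bind fun x => q.map (x + ·)

/-- `p` is a minimal idempotent of `(βS, +)`. -/
def IsMinimalIdempotentAdd {S : Type*} [AddSemigroup S] (p : Ultrafilter S) : Prop :=
  uadd p p = p ∧ ∀ q : Ultrafilter S, uadd q q = q →
    uadd q p = q → uadd p q = q → q = p

/-- `A` is central in the additive semigroup `(S, +)`. -/
def AddCentral {S : Type*} [AddSemigroup S] (A : Set S) : Prop :=
  ∃ p : Ultrafilter S, IsMinimalIdempotentAdd p ∧ A ∈ p

/-- The multiplicative semigroup `(R \ {0}, ·)` of an integral domain. -/
instance nzSemigroup {R : Type*} [CommRing R] [IsDomain R] :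
    Semigroup {x : R // x ≠ 0} where
  mul a b := ⟨a.1 * b.1, mul_ne_zero a.2 b.2⟩
  mul_assoc a b c := Subtype.ext (mul_assoc a.1 b.1 c.1)

/-- `A ⊆ R` is multiplicatively central in `(R \ {0}, ·)`. -/
def MulCentralNZ {R : Type*} [CommRing R] [IsDomain R] (A : Set R) : Prop :=
  Central {x : {x : R // x ≠ 0} | (x : R) ∈ A}

/-- `R` is a large integral domain: every nonzero ideal has finite (additive) index. -/
def IsLargeID (R : Type*) [CommRing R] [IsDomain R] : Prop :=
  ∀ I : Ideal R, I ≠ ⊥ → Finite (R ⧸ I)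

/-! ### Auxiliary development -/

open Filter Set

attribute [local instance] Ultrafilter.semigroup Ultrafilter.addSemigroup

theorem mem_umul {S : Type*} [Semigroup S] {p q : Ultrafilter S} {A : Set S} :
    A ∈ umul p q ↔ {x | {y | x * y ∈ A} ∈ q} ∈ p := Iff.rfl

theorem mem_uadd {S : Type*} [AddSemigroup S] {p q : Ultrafilter S} {A : Set S} :
    A ∈ uadd p q ↔ {x | {y | x + y ∈ A} ∈ q} ∈ p := Iff.rfl

/-- Key lemma: any closed nonempty left ideal of `(βS, ·)` contains a minimal idempotent. -/
theorem exists_minIdem_in {S : Type*} [Semigroup S] (N : Set (Ultrafilter S))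
    (hclosed : IsClosed N) (hne : N.Nonempty)
    (hideal : ∀ r : Ultrafilter S, ∀ p ∈ N, umul r p ∈ N) :
    ∃ p ∈ N, IsMinimalIdempotent p := by
  classical
  let 𝒜 : Set (Set (Ultrafilter S)) :=
    {L | L.Nonempty ∧ IsClosed L ∧ L ⊆ N ∧ ∀ r : Ultrafilter S, ∀ x ∈ L, r * x ∈ L}
  have hN𝒜 : N ∈ 𝒜 := ⟨hne, hclosed, subset_rfl, hideal⟩
  have hzorn : ∀ c ⊆ 𝒜, IsChain (· ⊆ ·) c → c.Nonempty → ∃ lb ∈ 𝒜, ∀ s ∈ c, lb ⊆ s := by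
    intro c hc𝒜 hchain hcne
    refine ⟨⋂₀ c, ⟨?_, isClosed_sInter fun t ht => (hc𝒜 ht).2.1, ?_, ?_⟩,
      fun s hs => Set.sInter_subset_of_mem hs⟩
    · haveI : Nonempty c := hcne.coe_sort
      have hdir : DirectedOn (· ⊇ ·) c := IsChain.directedOn hchain.symm
      exact IsCompact.nonempty_sInter_of_directed_nonempty_isCompact_isClosed
        hdir (fun U hU => (hc𝒜 hU).1)
        (fun U hU => (hc𝒜 hU).2.1.isCompact) (fun U hU => (hc𝒜 hU).2.1)
    · obtain ⟨t, ht⟩ := hcne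
      exact (Set.sInter_subset_of_mem ht).trans (hc𝒜 ht).2.2.1
    · intro r x hx
      rw [Set.mem_sInter] at hx ⊢
      exact fun t ht => (hc𝒜 ht).2.2.2 r x (hx t ht)
  obtain ⟨L, -, hLmin⟩ := zorn_superset_nonempty 𝒜 hzorn N hN𝒜
  obtain ⟨hLne, hLcl, hLN, hLid⟩ := hLmin.prop
  obtain ⟨p, hpL, hpp⟩ := exists_idempotent_in_compact_subsemigroup
    Ultrafilter.continuous_mul_left L hLne hLcl.isCompact
    (fun x hx y hy => hLid x y hy)
  refine ⟨p, hLN hpL, hpp, ?_⟩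
  intro q hqq hqp hpq
  have hqq' : q * q = q := hqq
  have hqp' : q * p = q := hqp
  have hpq' : p * q = q := hpq
  have hqL : q ∈ L := by rw [← hqp']; exact hLid q p hpL
  have hL'𝒜 : (· * q) '' Set.univ ∈ 𝒜 := by
    refine ⟨⟨q * q, ⟨q, trivial, rfl⟩⟩, ?_, ?_, ?_⟩
    · exact (isCompact_univ.image (Ultrafilter.continuous_mul_left q)).isClosed
    · rintro _ ⟨r, -, rfl⟩; exact hLN (hLid r q hqL)
    · rintro r _ ⟨r', -, rfl⟩
      exact ⟨r * r', trivial, mul_assoc r r' q⟩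
  have hL'sub : (· * q) '' Set.univ ⊆ L := by
    rintro _ ⟨r, -, rfl⟩; exact hLid r q hqL
  have hLeq := hLmin.eq_of_subset hL'𝒜 hL'sub
  have hpL' : p ∈ (· * q) '' Set.univ := hLeq.symm ▸ hpL
  obtain ⟨r, -, hr⟩ := hpL'
  have hr' : r * q = p := hr
  have hpqp : p * q = p := by
    rw [← hr', mul_assoc, hqq']
  exact (hpqp.symm.trans hpq').symm

/-- Additive version of the key lemma. -/
theorem exists_minIdemAdd_in {S : Type*} [AddSemigroup S] (N : Set (Ultrafilter S))
    (hclosed : IsClosed N) (hne : N.Nonempty)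
    (hideal : ∀ r : Ultrafilter S, ∀ p ∈ N, uadd r p ∈ N) :
    ∃ p ∈ N, IsMinimalIdempotentAdd p := by
  classical
  let 𝒜 : Set (Set (Ultrafilter S)) :=
    {L | L.Nonempty ∧ IsClosed L ∧ L ⊆ N ∧ ∀ r : Ultrafilter S, ∀ x ∈ L, r + x ∈ L}
  have hN𝒜 : N ∈ 𝒜 := ⟨hne, hclosed, subset_rfl, hideal⟩
  have hzorn : ∀ c ⊆ 𝒜, IsChain (· ⊆ ·) c → c.Nonempty → ∃ lb ∈ 𝒜, ∀ s ∈ c, lb ⊆ s := by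
    intro c hc𝒜 hchain hcne
    refine ⟨⋂₀ c, ⟨?_, isClosed_sInter fun t ht => (hc𝒜 ht).2.1, ?_, ?_⟩,
      fun s hs => Set.sInter_subset_of_mem hs⟩
    · haveI : Nonempty c := hcne.coe_sort
      have hdir : DirectedOn (· ⊇ ·) c := IsChain.directedOn hchain.symm
      exact IsCompact.nonempty_sInter_of_directed_nonempty_isCompact_isClosed
        hdir (fun U hU => (hc𝒜 hU).1)
        (fun U hU => (hc𝒜 hU).2.1.isCompact) (fun U hU => (hc𝒜 hU).2.1)
    · obtain ⟨t, ht⟩ := hcne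
      exact (Set.sInter_subset_of_mem ht).trans (hc𝒜 ht).2.2.1
    · intro r x hx
      rw [Set.mem_sInter] at hx ⊢
      exact fun t ht => (hc𝒜 ht).2.2.2 r x (hx t ht)
  obtain ⟨L, -, hLmin⟩ := zorn_superset_nonempty 𝒜 hzorn N hN𝒜
  obtain ⟨hLne, hLcl, hLN, hLid⟩ := hLmin.prop
  obtain ⟨p, hpL, hpp⟩ := exists_idempotent_in_compact_add_subsemigroup
    Ultrafilter.continuous_add_left L hLne hLcl.isCompact
    (fun x hx y hy => hLid x y hy)
  refine ⟨p, hLN hpL, hpp, ?_⟩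
  intro q hqq hqp hpq
  have hqq' : q + q = q := hqq
  have hqp' : q + p = q := hqp
  have hpq' : p + q = q := hpq
  have hqL : q ∈ L := by rw [← hqp']; exact hLid q p hpL
  have hL'𝒜 : (· + q) '' Set.univ ∈ 𝒜 := by
    refine ⟨⟨q + q, ⟨q, trivial, rfl⟩⟩, ?_, ?_, ?_⟩
    · exact (isCompact_univ.image (Ultrafilter.continuous_add_left q)).isClosed
    · rintro _ ⟨r, -, rfl⟩; exact hLN (hLid r q hqL)
    · rintro r _ ⟨r', -, rfl⟩
      exact ⟨r + r', trivial, add_assoc r r' q⟩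
  have hL'sub : (· + q) '' Set.univ ⊆ L := by
    rintro _ ⟨r, -, rfl⟩; exact hLid r q hqL
  have hLeq := hLmin.eq_of_subset hL'𝒜 hL'sub
  have hpL' : p ∈ (· + q) '' Set.univ := hLeq.symm ▸ hpL
  obtain ⟨r, -, hr⟩ := hpL'
  have hr' : r + q = p := hr
  have hpqp : p + q = p := by
    rw [← hr', add_assoc, hqq']
  exact (hpqp.symm.trans hpq').symm

/-- `Ultrafilter.map` along an additive homomorphism commutes with `uadd`. -/
theorem map_uadd {R R' : Type*} [AddSemigroup R] [AddSemigroup R'] (f : R → R')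
    (hf : ∀ x y, f (x + y) = f x + f y) (p q : Ultrafilter R) :
    Ultrafilter.map f (uadd p q) = uadd (p.map f) (q.map f) := by
  have h : ∀ A : Set R', A ∈ Ultrafilter.map f (uadd p q) ↔ A ∈ uadd (p.map f) (q.map f) := by
    intro A
    rw [Ultrafilter.mem_map, mem_uadd, mem_uadd, Ultrafilter.mem_map]
    have e : (f ⁻¹' {x | {y | x + y ∈ A} ∈ Ultrafilter.map f q})
        = {x | {y | x + y ∈ f ⁻¹' A} ∈ q} := by
      ext a
      simp only [Set.mem_preimage, Set.mem_setOf_eq, Ultrafilter.mem_map]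
      have e2 : (f ⁻¹' {y | f a + y ∈ A}) = {y | a + y ∈ f ⁻¹' A} := by
        ext b
        simp only [Set.mem_preimage, Set.mem_setOf_eq]
        rw [hf]
      rw [e2]
      exact Iff.rfl
    rw [e]
  exact Ultrafilter.coe_injective (Filter.ext fun A => h A)

theorem umap_inj {α β : Type*} {f : α → β} (hf : Function.Injective f) :
    Function.Injective (Ultrafilter.map f) := fun u v h =>
  Ultrafilter.coe_injective (Filter.map_injective hf
    (by rw [← Ultrafilter.coe_map, ← Ultrafilter.coe_map, h]))

theorem umap_comap {α β : Type*} {f : α → β} (hf : Function.Injective f) (u : Ultrafilter β)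
    (hr : Set.range f ∈ u) : Ultrafilter.map f (u.comap hf hr) = u := by
  apply Ultrafilter.coe_injective
  rw [Ultrafilter.coe_map, Ultrafilter.coe_comap, Filter.map_comap]
  exact inf_eq_left.mpr (Filter.le_principal_iff.mpr hr)

theorem uadd_pure {M : Type*} [AddSemigroup M] (a b : M) :
    uadd (pure a) (pure b) = (pure (a + b) : Ultrafilter M) := by
  apply Ultrafilter.coe_injective
  apply Filter.ext
  intro A
  constructor
  · intro h; exact h
  · intro h; exact h

/-- Every additive idempotent ultrafilter on a large domain contains every principal
nonzero ideal. -/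
theorem idem_mem_span {R : Type*} [CommRing R] [IsDomain R] (hR : IsLargeID R) {c : R}
    (hc : c ≠ 0) (q : Ultrafilter R) (hq : uadd q q = q) :
    ((Ideal.span {c} : Ideal R) : Set R) ∈ q := by
  set I := Ideal.span {c} with hI
  have hIbot : I ≠ ⊥ := by
    rw [hI, Ne, Ideal.span_singleton_eq_bot]; exact hc
  haveI := hR I hIbot
  set π : R → R ⧸ I := ⇑(Ideal.Quotient.mk I) with hπdef
  have hπ : ∀ x y, π (x + y) = π x + π y := fun x y => map_add _ x y
  have hidem : uadd (q.map π) (q.map π) = q.map π := by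
    rw [← map_uadd π hπ, hq]
  obtain ⟨t, ht⟩ := Ultrafilter.eq_pure_of_finite (q.map π)
  have hpt : (pure (t + t) : Ultrafilter (R ⧸ I)) = pure t := by
    rw [← uadd_pure, ← ht, hidem]
  have htt : t + t = t := Ultrafilter.pure_injective hpt
  have ht0 : t = 0 := add_eq_right.mp htt
  have hmem : π ⁻¹' {(0 : R ⧸ I)} ∈ q := by
    apply Ultrafilter.mem_map.mp
    rw [ht, ht0]
    exact rfl
  have hset : (I : Set R) = π ⁻¹' {(0 : R ⧸ I)} := by
    ext x
    simp only [Set.mem_preimage, Set.mem_singleton_iff, SetLike.mem_coe]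
    exact (Ideal.Quotient.eq_zero_iff_mem).symm
  rw [hset]
  exact hmem

/-- There is a free minimal additive idempotent on an infinite ring. -/
theorem exists_free_min_add_idem (R : Type*) [CommRing R] [Infinite R] :
    ∃ p : Ultrafilter R, (∀ F : Set R, F.Finite → Fᶜ ∈ p) ∧ IsMinimalIdempotentAdd p := by
  let N : Set (Ultrafilter R) := {u | ∀ F : Set R, F.Finite → Fᶜ ∈ u}
  have hclosed : IsClosed N := by
    have : N = ⋂ (F : Set R) (_ : F.Finite), {u : Ultrafilter R | Fᶜ ∈ u} := by
      ext u; simp [N]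
    rw [this]
    exact isClosed_iInter fun F => isClosed_iInter fun _ => ultrafilter_isClosed_basic _
  have hne : N.Nonempty := by
    refine ⟨Ultrafilter.of Filter.cofinite, fun F hF => ?_⟩
    exact Ultrafilter.of_le Filter.cofinite (by rw [Filter.mem_cofinite, compl_compl]; exact hF)
  have hideal : ∀ r : Ultrafilter R, ∀ u ∈ N, uadd r u ∈ N := by
    intro r u hu F hF
    rw [mem_uadd]
    have huniv : {x : R | {y : R | x + y ∈ Fᶜ} ∈ u} = Set.univ := by
      apply Set.eq_univ_of_forall
      intro x
      have hfin : ((x + ·) ⁻¹' F).Finite :=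
        hF.preimage ((add_right_injective x).injOn)
      have := hu _ hfin
      convert this using 1
      exact Iff.rfl
    rw [huniv]
    exact Filter.univ_mem
  obtain ⟨p, hpN, hpmin⟩ := exists_minIdemAdd_in N hclosed hne hideal
  exact ⟨p, hpN, hpmin⟩

theorem AddCentral.mono {S : Type*} [AddSemigroup S] {A B : Set S} (h : AddCentral A)
    (hAB : A ⊆ B) : AddCentral B :=
  let ⟨p, hp, hA⟩ := h
  ⟨p, hp, Filter.mem_of_superset hA hAB⟩

/-- Core lemma: multiplying an additively central set by a nonzero constant keeps it central. -/
theorem addCentral_smul {R : Type*} [CommRing R] [IsDomain R] (hR : IsLargeID R) {c : R}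
    (hc : c ≠ 0) {B : Set R} (hB : AddCentral B) : AddCentral ((c * ·) '' B) := by
  obtain ⟨u, ⟨huu, humin⟩, hBu⟩ := hB
  set f : R → R := (c * ·) with hfdef
  have hfinj : Function.Injective f := fun x y h => mul_left_cancel₀ hc h
  have hfadd : ∀ x y, f (x + y) = f x + f y := fun x y => mul_add c x y
  refine ⟨u.map f, ⟨?_, ?_⟩, ?_⟩
  · rw [← map_uadd f hfadd, huu]
  · intro q hqq hqv hvq
    have hrange : Set.range f ∈ q := by
      have hspan := idem_mem_span hR hc q hqq
      have hre : Set.range f = ((Ideal.span {c} : Ideal R) : Set R) := by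
        ext x
        simp only [Set.mem_range, SetLike.mem_coe, Ideal.mem_span_singleton']
        constructor
        · rintro ⟨y, rfl⟩; exact ⟨y, mul_comm y c⟩
        · rintro ⟨y, rfl⟩; exact ⟨y, mul_comm c y⟩
      rw [hre]; exact hspan
    set q' := q.comap hfinj hrange with hq'def
    have hmapq' : q'.map f = q := umap_comap hfinj q hrange
    have h1 : uadd q' q' = q' := by
      apply umap_inj hfinj
      rw [map_uadd f hfadd, hmapq']
      exact hqq
    have h2 : uadd q' u = q' := by
      apply umap_inj hfinj
      rw [map_uadd f hfadd, hmapq']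
      exact hqv
    have h3 : uadd u q' = q' := by
      apply umap_inj hfinj
      rw [map_uadd f hfadd, hmapq']
      exact hvq
    have heq := humin q' h1 h2 h3
    rw [← hmapq', heq]
  · exact Ultrafilter.mem_map.mpr (Filter.mem_of_superset hBu (Set.subset_preimage_image f B))

/-- In an infinite large integral domain, every finite partition has a cell that is
both additively central in `(R, +)` and multiplicatively central in `(R \ {0}, ·)`. -/
theorem stmt_15 {R : Type*} [CommRing R] [IsDomain R] [Infinite R]
    (hR : IsLargeID R) (k : ℕ) (C : Fin k → Set R) (hcov : (⋃ i, C i) = Set.univ) :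
    ∃ i, AddCentral (C i) ∧ MulCentralNZ (C i) := by
  classical
  haveI : Nontrivial R := inferInstance
  haveI : Nonempty {x : R // x ≠ 0} := ⟨⟨1, one_ne_zero⟩⟩
  set S₀ := {x : R // x ≠ 0} with hS₀
  let M : Set (Ultrafilter S₀) := {p | ∀ A : Set S₀, A ∈ p → AddCentral ((↑) '' A : Set R)}
  have hMclosed : IsClosed M := by
    have hMeq : M = ⋂ (A : Set S₀) (_ : ¬ AddCentral ((↑) '' A : Set R)),
        {p : Ultrafilter S₀ | A ∈ p}ᶜ := by
      ext p
      simp only [Set.mem_iInter, Set.mem_compl_iff, Set.mem_setOf_eq, M]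
      constructor
      · intro hp A hA hAp
        exact hA (hp A hAp)
      · intro hp A hAp
        by_contra hA
        exact hp A hA hAp
    rw [hMeq]
    exact isClosed_iInter fun A => isClosed_iInter fun _ =>
      (ultrafilter_isOpen_basic A).isClosed_compl
  obtain ⟨p₀, hp₀N, hp₀min⟩ := exists_free_min_add_idem R
  have hMne : M.Nonempty := by
    have h0 : Set.range ((↑) : S₀ → R) ∈ p₀ := by
      have hre : Set.range ((↑) : S₀ → R) = ({0} : Set R)ᶜ := by
        ext x
        simp [Subtype.range_coe_subtype]
      rw [hre]
      exact hp₀N {0} (Set.finite_singleton 0)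
    refine ⟨p₀.comap Subtype.coe_injective h0, ?_⟩
    intro A hA
    have himg : (↑) '' A ∈ p₀ := (Ultrafilter.mem_comap _ _ _).mp hA
    exact ⟨p₀, hp₀min, himg⟩
  have hMideal : ∀ r : Ultrafilter S₀, ∀ p ∈ M, umul r p ∈ M := by
    intro r p hp A hA
    rw [mem_umul] at hA
    obtain ⟨x, hx⟩ := Ultrafilter.nonempty_of_mem hA
    have hcen : AddCentral ((↑) '' {y : S₀ | x * y ∈ A} : Set R) := hp _ hx
    have hsm := addCentral_smul hR x.2 hcen
    refine hsm.mono ?_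
    rintro _ ⟨_, ⟨y, hy, rfl⟩, rfl⟩
    exact ⟨x * y, hy, rfl⟩
  obtain ⟨p, hpM, hpmin⟩ := exists_minIdem_in M hMclosed hMne hMideal
  have hcell : ∃ i, {x : S₀ | (x : R) ∈ C i} ∈ p := by
    have huniv : (⋃ i, {x : S₀ | (x : R) ∈ C i}) ∈ p := by
      have : (⋃ i, {x : S₀ | (x : R) ∈ C i}) = Set.univ := by
        apply Set.eq_univ_of_forall
        intro x
        have hx : (x : R) ∈ ⋃ i, C i := by rw [hcov]; trivial
        obtain ⟨s, ⟨i, rfl⟩, hs⟩ := hx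
        exact Set.mem_iUnion.mpr ⟨i, hs⟩
      rw [this]
      exact Filter.univ_mem
    have := (Ultrafilter.finite_biUnion_mem_iff (Set.finite_univ (α := Fin k))).mp
      (by rwa [Set.biUnion_univ])
    obtain ⟨i, -, hi⟩ := this
    exact ⟨i, hi⟩
  obtain ⟨i, hi⟩ := hcell
  refine ⟨i, ?_, ⟨p, hpmin, hi⟩⟩
  exact (hpM _ hi).mono (by rintro _ ⟨y, hy, rfl⟩; exact hy)
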